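/- Let X₁ and X₂ be independent logistic random variables and h(x) = P(X₁ + X₂ > x) for x ≥ 0. Then the mean of the probability density h on [0,∞) equals π²/6, i.e., ∫_0^∞ x P(X₁ + X₂ > x) dx = π²/6. -/

import Mathlib

open MeasureTheory ProbabilityTheory Set Real Filter Topology

/-- The logistic distribution on ℝ, with density `(e^{x/2}+e^{-x/2})⁻²`. -/
noncomputable def logisticMeasure : Measure ℝ :=
  volume.withDensity fun x => ENNReal.ofReal ((Real.exp (x / 2) + Real.exp (-x / 2)) ^ 2)⁻¹

namespace LogisticAux

/-- The logistic density in a convenient form. -/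
noncomputable def gl (x : ℝ) : ℝ := Real.exp x / (1 + Real.exp x) ^ 2

lemma gl_eq (x : ℝ) : ((Real.exp (x / 2) + Real.exp (-x / 2)) ^ 2)⁻¹ = gl x := by
  unfold gl
  have h1 : Real.exp (x / 2) * Real.exp (x / 2) = Real.exp x := by
    rw [← Real.exp_add]; ring_nf
  have h2 : Real.exp (x / 2) * Real.exp (-x / 2) = 1 := by
    rw [← Real.exp_add]; ring_nf; exact Real.exp_zero
  have h3 : Real.exp (-x / 2) * Real.exp (-x / 2) = Real.exp (-x) := by
    rw [← Real.exp_add]; ring_nf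
  have h4 : Real.exp x * Real.exp (-x) = 1 := by
    rw [← Real.exp_add]; simp
  have e1 := Real.exp_pos x
  have e2 := Real.exp_pos (-x)
  have hq : (Real.exp (x / 2) + Real.exp (-x / 2)) ^ 2 = (1 + Real.exp x) ^ 2 / Real.exp x := by
    field_simp
    rw [neg_div] at h2 h3; nlinarith [h1, h2, h3, h4]
  rw [hq]
  rw [inv_div]

lemma gl_nonneg (x : ℝ) : 0 ≤ gl x := by
  unfold gl; positivity

lemma one_add_exp_pos (x : ℝ) : 0 < 1 + Real.exp x := by positivity

lemma gl_cont : Continuous gl := by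
  unfold gl
  exact Real.continuous_exp.div (by continuity) (fun x => by positivity)

lemma gl_even (x : ℝ) : gl (-x) = gl x := by
  unfold gl
  have h4 : Real.exp x * Real.exp (-x) = 1 := by rw [← Real.exp_add]; simp
  have e1 := Real.exp_pos x
  have e2 := Real.exp_pos (-x)
  field_simp
  nlinarith [h4]

lemma tendsto_linear_mul_exp {a : ℝ} (b c : ℝ) (ha : 0 < a) :
    Filter.Tendsto (fun x : ℝ => (b * x + c) * Real.exp (-(a * x))) atTop (𝓝 0) := by
  have hcomp : Filter.Tendsto (fun x : ℝ => a * x) atTop atTop :=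
    Filter.Tendsto.const_mul_atTop ha tendsto_id
  have h1 := Real.tendsto_pow_mul_exp_neg_atTop_nhds_zero 1
  have hy : Filter.Tendsto (fun y : ℝ => (b / a * y + c) * Real.exp (-y)) atTop (𝓝 0) := by
    have h2 := (h1.const_mul (b / a)).add (Real.tendsto_exp_neg_atTop_nhds_zero.const_mul c)
    simp only [mul_zero, add_zero, zero_add] at h2
    refine h2.congr fun y => ?_
    ring
  have := hy.comp hcomp
  refine this.congr fun x => ?_
  simp only [Function.comp_apply]
  rw [mul_comm a x]
  have : b / a * (x * a) = b * x := by field_simp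
  rw [this]

/-- derivative fact for the exponential integral -/
lemma hasDerivAt_exp_aux {a : ℝ} (ha : 0 < a) (x : ℝ) :
    HasDerivAt (fun x : ℝ => -((x / a + 1 / a ^ 2) * Real.exp (-(a * x))))
      (x * Real.exp (-(a * x))) x := by
  have hlin : HasDerivAt (fun x : ℝ => x / a + 1 / a ^ 2) (1 / a) x :=
    ((hasDerivAt_id x).div_const a).add_const _
  have hexp : HasDerivAt (fun x : ℝ => Real.exp (-(a * x))) (Real.exp (-(a * x)) * -(a * 1)) x :=
    (((hasDerivAt_id x).const_mul a).neg).exp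
  have := (hlin.mul hexp).neg
  refine this.congr_deriv ?_
  have := Real.exp_pos (-(a * x))
  field_simp
  ring

/-- ∫ x e^{-ax} over (0,∞), integrability. -/
lemma integrableOn_mul_exp {a : ℝ} (ha : 0 < a) :
    IntegrableOn (fun x => x * Real.exp (-(a * x))) (Ioi (0:ℝ)) := by
  have htd : Filter.Tendsto (fun x : ℝ => -((x / a + 1 / a ^ 2) * Real.exp (-(a * x)))) atTop (𝓝 0) := by
    have h0 := (tendsto_linear_mul_exp (1 / a) (1 / a ^ 2) ha).neg
    rw [neg_zero] at h0
    refine h0.congr fun x => ?_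
    ring_nf
  exact integrableOn_Ioi_deriv_of_nonneg'
    (fun x _ => hasDerivAt_exp_aux ha x)
    (fun x hx => mul_nonneg hx.out.le (Real.exp_pos _).le) htd

lemma integral_mul_exp {a : ℝ} (ha : 0 < a) :
    ∫ x in Ioi (0:ℝ), x * Real.exp (-(a * x)) = 1 / a ^ 2 := by
  have htd : Filter.Tendsto (fun x : ℝ => -((x / a + 1 / a ^ 2) * Real.exp (-(a * x)))) atTop (𝓝 0) := by
    have h0 := (tendsto_linear_mul_exp (1 / a) (1 / a ^ 2) ha).neg
    rw [neg_zero] at h0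
    refine h0.congr fun x => ?_
    ring_nf
  have h := integral_Ioi_of_hasDerivAt_of_nonneg'
    (fun x _ => hasDerivAt_exp_aux ha x)
    (fun x hx => mul_nonneg hx.out.le (Real.exp_pos _).le) htd
  rw [h]
  simp

/-- Basel via series: lintegral of x/(e^{cx}-1). -/
lemma lintegral_basel {c : ℝ} (hc : 0 < c) :
    ∫⁻ x in Ioi (0:ℝ), ENNReal.ofReal (x / (Real.exp (c * x) - 1)) =
      ENNReal.ofReal (Real.pi ^ 2 / (6 * c ^ 2)) := by
  have hone : ∀ x : ℝ, 0 < x → 1 < Real.exp (c * x) := by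
    intro x hx
    have : Real.exp 0 < Real.exp (c * x) := Real.exp_lt_exp.mpr (by nlinarith)
    simpa using this
  have key : ∀ x ∈ Ioi (0:ℝ), ENNReal.ofReal (x / (Real.exp (c * x) - 1)) =
      ∑' n : ℕ, ENNReal.ofReal (x * Real.exp (-((((n:ℝ)+1) * c) * x))) := by
    intro x hx
    have hx0 : 0 < x := hx
    set r := Real.exp (-(c * x)) with hr
    have hr0 : 0 < r := Real.exp_pos _
    have hr1 : r < 1 := Real.exp_lt_one_iff.mpr (by nlinarith)
    have hterm : (fun n : ℕ => x * Real.exp (-((((n:ℝ)+1) * c) * x)))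
        = fun n : ℕ => x * r * r ^ n := by
      funext n
      rw [hr, ← Real.exp_nat_mul,
        show x * Real.exp (-(c*x)) * Real.exp ((n:ℝ) * -(c*x))
          = x * (Real.exp (-(c*x)) * Real.exp ((n:ℝ) * -(c*x))) from by ring,
        ← Real.exp_add]
      congr 1
      ring
    have hsum : HasSum (fun n : ℕ => x * r * r ^ n) (x / (Real.exp (c * x) - 1)) := by
      have hg : HasSum (fun n : ℕ => r ^ n) (1 - r)⁻¹ :=
        hasSum_geometric_of_lt_one hr0.le hr1
      have hg1 : HasSum (fun n : ℕ => x * r * r ^ n) (x * r * (1 - r)⁻¹) := hg.mul_left _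
      have heq : x * r * (1 - r)⁻¹ = x / (Real.exp (c * x) - 1) := by
        have hex : Real.exp (c * x) * r = 1 := by rw [hr, ← Real.exp_add]; simp
        have h1r : (1:ℝ) - r ≠ 0 := by nlinarith
        have hcx : Real.exp (c * x) - 1 ≠ 0 := by
          have := hone x hx0; nlinarith
        rw [eq_div_iff hcx]
        field_simp
        rw [mul_comm x c]; nlinarith [hex]
      rwa [heq] at hg1
    rw [← hsum.tsum_eq,
      ENNReal.ofReal_tsum_of_nonneg (fun n => by positivity) hsum.summable]
    exact tsum_congr fun n => by rw [(congrFun hterm n).symm]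
  rw [setLIntegral_congr_fun measurableSet_Ioi key]
  rw [lintegral_tsum (fun n => (Measurable.aemeasurable (by fun_prop)))]
  have hint : ∀ n : ℕ, ∫⁻ x in Ioi (0:ℝ), ENNReal.ofReal (x * Real.exp (-((((n:ℝ)+1) * c) * x)))
      = ENNReal.ofReal (1 / (((n:ℝ)+1) * c) ^ 2) := by
    intro n
    have ha : 0 < ((n:ℝ)+1) * c := by positivity
    rw [← ofReal_integral_eq_lintegral_ofReal (integrableOn_mul_exp ha)
      (by filter_upwards [ae_restrict_mem measurableSet_Ioi] with x hx using
        mul_nonneg hx.out.le (Real.exp_pos _).le)]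
    rw [integral_mul_exp ha]
  simp_rw [hint]
  have hz : HasSum (fun n : ℕ => 1 / (((n:ℝ)+1) * c) ^ 2) (Real.pi ^ 2 / (6 * c ^ 2)) := by
    have h0 : HasSum (fun n : ℕ => (1:ℝ) / ((n:ℝ)+1) ^ 2) (Real.pi ^ 2 / 6) := by
      have := (hasSum_nat_add_iff' (f := fun n : ℕ => (1:ℝ) / (n:ℝ) ^ 2) 1).mpr hasSum_zeta_two
      simpa using this
    have h1 := h0.mul_right (1 / c ^ 2)
    have hf : (fun n : ℕ => 1 / ((n:ℝ)+1) ^ 2 * (1 / c ^ 2)) = fun n : ℕ => 1 / (((n:ℝ)+1) * c) ^ 2 := by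
      funext n
      rw [mul_pow, one_div_mul_one_div]
    rw [hf] at h1
    have hv : Real.pi ^ 2 / 6 * (1 / c ^ 2) = Real.pi ^ 2 / (6 * c ^ 2) := by
      field_simp
    rwa [hv] at h1
  rw [← hz.tsum_eq]
  exact (ENNReal.ofReal_tsum_of_nonneg (fun n => by positivity) hz.summable).symm

lemma integrableOn_basel {c : ℝ} (hc : 0 < c) :
    IntegrableOn (fun x => x / (Real.exp (c * x) - 1)) (Ioi (0:ℝ)) := by
  have hone : ∀ x : ℝ, 0 < x → 1 < Real.exp (c * x) := by
    intro x hx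
    have : Real.exp 0 < Real.exp (c * x) := Real.exp_lt_exp.mpr (by nlinarith)
    simpa using this
  have hnn : 0 ≤ᵐ[volume.restrict (Ioi (0:ℝ))] fun x => x / (Real.exp (c * x) - 1) := by
    filter_upwards [ae_restrict_mem measurableSet_Ioi] with x hx
    have := hone x hx
    have hx0 : (0:ℝ) < x := hx
    exact div_nonneg hx0.le (by linarith)
  have hmeas : AEStronglyMeasurable (fun x => x / (Real.exp (c * x) - 1))
      (volume.restrict (Ioi (0:ℝ))) := by
    apply Measurable.aestronglyMeasurable
    fun_prop
  refine ⟨hmeas, ?_⟩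
  rw [hasFiniteIntegral_iff_ofReal hnn, lintegral_basel hc]
  exact ENNReal.ofReal_lt_top

lemma integral_basel {c : ℝ} (hc : 0 < c) :
    ∫ x in Ioi (0:ℝ), x / (Real.exp (c * x) - 1) = Real.pi ^ 2 / (6 * c ^ 2) := by
  have hone : ∀ x : ℝ, 0 < x → 1 < Real.exp (c * x) := by
    intro x hx
    have : Real.exp 0 < Real.exp (c * x) := Real.exp_lt_exp.mpr (by nlinarith)
    simpa using this
  have hnn : 0 ≤ᵐ[volume.restrict (Ioi (0:ℝ))] fun x => x / (Real.exp (c * x) - 1) := by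
    filter_upwards [ae_restrict_mem measurableSet_Ioi] with x hx
    have := hone x hx
    have hx0 : (0:ℝ) < x := hx
    exact div_nonneg hx0.le (by linarith)
  rw [integral_eq_lintegral_of_nonneg_ae hnn (Measurable.aestronglyMeasurable (by fun_prop))]
  rw [lintegral_basel hc, ENNReal.toReal_ofReal (by positivity)]

lemma fermi_eq : ∀ x ∈ Ioi (0:ℝ),
    x / (1 + Real.exp x) = x / (Real.exp (1 * x) - 1) - 2 * (x / (Real.exp (2 * x) - 1)) := by
  intro x hx
  have hx0 : (0:ℝ) < x := hx
  have h1 : 1 < Real.exp x := by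
    have : Real.exp 0 < Real.exp x := Real.exp_lt_exp.mpr hx0
    simpa using this
  have h2 : Real.exp (2 * x) = Real.exp x * Real.exp x := by
    rw [← Real.exp_add]; ring_nf
  rw [one_mul, h2]
  have d1 : Real.exp x - 1 ≠ 0 := sub_ne_zero.mpr (ne_of_gt h1)
  have d2 : Real.exp x * Real.exp x - 1 ≠ 0 := by nlinarith
  have d3 : 1 + Real.exp x ≠ 0 := by positivity
  rw [show Real.exp x * Real.exp x - 1 = (Real.exp x - 1) * (1 + Real.exp x) by ring]
  field_simp
  ring

lemma integrableOn_fermi : IntegrableOn (fun x => x / (1 + Real.exp x)) (Ioi (0:ℝ)) := by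
  have h := (integrableOn_basel (c := 1) one_pos).sub
    ((integrableOn_basel (c := 2) two_pos).const_mul 2)
  refine h.congr ?_
  filter_upwards [ae_restrict_mem measurableSet_Ioi] with x hx
  exact (fermi_eq x hx).symm

lemma integral_fermi : ∫ x in Ioi (0:ℝ), x / (1 + Real.exp x) = Real.pi ^ 2 / 12 := by
  rw [setIntegral_congr_fun measurableSet_Ioi fermi_eq]
  rw [integral_sub (integrableOn_basel (c := 1) one_pos)
    ((integrableOn_basel (c := 2) two_pos).const_mul 2)]
  rw [MeasureTheory.integral_const_mul, integral_basel one_pos, integral_basel two_pos]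
  norm_num
  ring

lemma gl_le_exp_neg (x : ℝ) : gl x ≤ Real.exp (-x) := by
  unfold gl
  rw [div_le_iff₀ (by positivity)]
  have h4 : Real.exp (-x) * Real.exp x = 1 := by rw [← Real.exp_add]; simp
  nlinarith [Real.exp_pos x, Real.exp_pos (-x)]

lemma sq_gl_bound {x : ℝ} (hx : 0 < x) :
    x ^ 2 * gl x ≤ 2 * (x * Real.exp (-(2⁻¹ * x))) := by
  have h2 : x ≤ 2 * Real.exp (2⁻¹ * x) := by nlinarith [Real.add_one_le_exp (2⁻¹ * x)]
  have h3 : Real.exp (2⁻¹ * x) * Real.exp (-x) = Real.exp (-(2⁻¹ * x)) := by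
    rw [← Real.exp_add]; ring_nf
  calc x ^ 2 * gl x ≤ x ^ 2 * Real.exp (-x) :=
        mul_le_mul_of_nonneg_left (gl_le_exp_neg x) (sq_nonneg x)
    _ = x * (x * Real.exp (-x)) := by ring
    _ ≤ (2 * Real.exp (2⁻¹ * x)) * (x * Real.exp (-x)) :=
        mul_le_mul_of_nonneg_right h2 (by positivity)
    _ = 2 * (x * (Real.exp (2⁻¹ * x) * Real.exp (-x))) := by ring
    _ = 2 * (x * Real.exp (-(2⁻¹ * x))) := by rw [h3]

lemma integrableOn_sq_gl : IntegrableOn (fun x => x ^ 2 * gl x) (Ioi (0:ℝ)) := by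
  refine Integrable.mono' ((integrableOn_mul_exp (a := 2⁻¹) (by norm_num)).const_mul 2)
    (((measurable_id.pow_const 2).mul gl_cont.measurable).aestronglyMeasurable) ?_
  filter_upwards [ae_restrict_mem measurableSet_Ioi] with x hx
  have hx0 : (0:ℝ) < x := hx
  rw [Real.norm_eq_abs, abs_of_nonneg (mul_nonneg (sq_nonneg x) (gl_nonneg x))]
  exact sq_gl_bound hx0

lemma hasDerivAt_F (x : ℝ) :
    HasDerivAt (fun x : ℝ => -(x ^ 2 * (1 + Real.exp x)⁻¹))
      (x ^ 2 * gl x - 2 * (x / (1 + Real.exp x))) x := by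
  have h1 : HasDerivAt (fun x : ℝ => 1 + Real.exp x) (Real.exp x) x :=
    (Real.hasDerivAt_exp x).const_add 1
  have hinv := h1.inv (by positivity)
  have hx2 : HasDerivAt (fun x : ℝ => x ^ 2) (2 * x) x := by
    simpa using hasDerivAt_pow 2 x
  have := (hx2.mul hinv).neg
  refine this.congr_deriv ?_
  simp only [Pi.inv_apply]
  unfold gl
  have hpos : (0:ℝ) < 1 + Real.exp x := by positivity
  field_simp
  ring

lemma integral_sq_gl : ∫ x in Ioi (0:ℝ), x ^ 2 * gl x = Real.pi ^ 2 / 6 := by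
  have hderiv : ∀ x ∈ Ioi (0:ℝ), HasDerivAt (fun x : ℝ => -(x ^ 2 * (1 + Real.exp x)⁻¹))
      (x ^ 2 * gl x - 2 * (x / (1 + Real.exp x))) x := fun x _ => hasDerivAt_F x
  have hint : IntegrableOn (fun x => x ^ 2 * gl x - 2 * (x / (1 + Real.exp x))) (Ioi (0:ℝ)) :=
    integrableOn_sq_gl.sub (integrableOn_fermi.const_mul 2)
  have htd : Filter.Tendsto (fun x : ℝ => -(x ^ 2 * (1 + Real.exp x)⁻¹)) atTop (𝓝 0) := by
    apply squeeze_zero_norm' ?_ (Real.tendsto_pow_mul_exp_neg_atTop_nhds_zero 2)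
    filter_upwards [Filter.eventually_ge_atTop (0:ℝ)] with x hx
    rw [norm_neg, Real.norm_eq_abs, abs_of_nonneg (by positivity)]
    rw [Real.exp_neg]
    have h1 : Real.exp x ≤ 1 + Real.exp x := by linarith
    have h2 : (1 + Real.exp x)⁻¹ ≤ (Real.exp x)⁻¹ := by
      apply inv_anti₀ (Real.exp_pos x) h1
    exact mul_le_mul_of_nonneg_left h2 (sq_nonneg x)
  have h0 := integral_Ioi_of_hasDerivAt_of_tendsto
    (a := (0:ℝ)) ((hasDerivAt_F 0).continuousAt.continuousWithinAt) hderiv hint htd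
  simp only [ne_eq, OfNat.ofNat_ne_zero, not_false_eq_true, zero_pow, zero_mul, neg_zero,
    sub_zero] at h0
  have h2 := integral_sub integrableOn_sq_gl (integrableOn_fermi.const_mul 2)
  rw [h0] at h2
  have h3 : ∫ x in Ioi (0:ℝ), 2 * (x / (1 + Real.exp x)) = Real.pi ^ 2 / 6 := by
    rw [MeasureTheory.integral_const_mul, integral_fermi]
    ring
  rw [h3] at h2
  linarith [h2]


lemma hasDerivAt_G (x : ℝ) :
    HasDerivAt (fun x : ℝ => -(1 + Real.exp x)⁻¹) (gl x) x := by
  have h1 : HasDerivAt (fun x : ℝ => 1 + Real.exp x) (Real.exp x) x :=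
    (Real.hasDerivAt_exp x).const_add 1
  have := (h1.inv (by positivity)).neg
  refine this.congr_deriv ?_
  unfold gl
  field_simp

lemma tendsto_G : Filter.Tendsto (fun x : ℝ => -(1 + Real.exp x)⁻¹) atTop (𝓝 0) := by
  have h1 : Filter.Tendsto (fun x : ℝ => 1 + Real.exp x) atTop atTop :=
    Filter.tendsto_atTop_add_const_left _ 1 Real.tendsto_exp_atTop
  have := h1.inv_tendsto_atTop.neg
  simpa using this

lemma integrableOn_gl : IntegrableOn gl (Ioi (0:ℝ)) :=
  integrableOn_Ioi_deriv_of_nonneg' (fun x _ => hasDerivAt_G x)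
    (fun x _ => gl_nonneg x) tendsto_G

lemma integral_gl : ∫ x in Ioi (0:ℝ), gl x = 1 / 2 := by
  have := integral_Ioi_of_hasDerivAt_of_nonneg' (a := (0:ℝ)) (fun x _ => hasDerivAt_G x)
    (fun x _ => gl_nonneg x) tendsto_G
  rw [this]
  norm_num

/-- The density as an `ℝ≥0∞`-valued function. -/
noncomputable def fd (x : ℝ) : ENNReal := ENNReal.ofReal (gl x)

lemma fd_meas : Measurable fd := by
  exact (ENNReal.measurable_ofReal.comp gl_cont.measurable)

/-- reflection of a lintegral over all of ℝ -/
lemma lintegral_neg_eq {h : ℝ → ENNReal} (hm : Measurable h) :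
    ∫⁻ x, h (-x) = ∫⁻ x, h x := by
  conv_rhs => rw [← Measure.map_neg_eq_self (volume : Measure ℝ)]
  rw [lintegral_map hm measurable_neg]

/-- reflection: Iio to Ioi -/
lemma lintegral_Iio_eq {h : ℝ → ENNReal} (hm : Measurable h) :
    ∫⁻ x in Iio (0:ℝ), h x = ∫⁻ x in Ioi (0:ℝ), h (-x) := by
  have : (volume : Measure ℝ).restrict (Iio 0)
      = Measure.map Neg.neg ((volume : Measure ℝ).restrict (Ioi 0)) := by
    have h1 : (Neg.neg ⁻¹' (Iio (0:ℝ))) = Ioi 0 := by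
      ext y; simp
    rw [← h1, ← Measure.restrict_map measurable_neg measurableSet_Iio,
      Measure.map_neg_eq_self (volume : Measure ℝ)]
  rw [this, lintegral_map hm measurable_neg]

lemma lintegral_even_split {h : ℝ → ENNReal} (hm : Measurable h) (he : ∀ x, h (-x) = h x) :
    ∫⁻ x, h x = 2 * ∫⁻ x in Ioi (0:ℝ), h x := by
  rw [← lintegral_add_compl h (measurableSet_Ioi (a := (0:ℝ))), compl_Ioi,
    ← Measure.restrict_congr_set Iio_ae_eq_Iic, lintegral_Iio_eq hm]
  simp_rw [he]
  rw [two_mul]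

/-- second moment -/
lemma lintegral_sq_fd : ∫⁻ x, ENNReal.ofReal (x ^ 2) * fd x = ENNReal.ofReal (Real.pi ^ 2 / 3) := by
  have hm : Measurable fun x : ℝ => ENNReal.ofReal (x ^ 2) * fd x :=
    (ENNReal.measurable_ofReal.comp (measurable_id.pow_const 2)).mul fd_meas
  rw [lintegral_even_split hm (fun x => by simp [fd, gl_even])]
  have : ∀ x : ℝ, ENNReal.ofReal (x ^ 2) * fd x = ENNReal.ofReal (x ^ 2 * gl x) := by
    intro x
    rw [ENNReal.ofReal_mul (sq_nonneg x)]
    rfl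
  simp_rw [this]
  rw [← ofReal_integral_eq_lintegral_ofReal integrableOn_sq_gl
    (by filter_upwards [ae_restrict_mem measurableSet_Ioi] with x _ using
      mul_nonneg (sq_nonneg x) (gl_nonneg x)), integral_sq_gl]
  rw [show Real.pi ^ 2 / 3 = 2 * (Real.pi ^ 2 / 6) by ring,
    ENNReal.ofReal_mul (by norm_num), ENNReal.ofReal_ofNat]

/-- total mass -/
lemma lintegral_fd : ∫⁻ x, fd x = 1 := by
  rw [lintegral_even_split fd_meas (fun x => by simp [fd, gl_even])]
  unfold fd
  rw [← ofReal_integral_eq_lintegral_ofReal integrableOn_gl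
    (by filter_upwards [ae_restrict_mem measurableSet_Ioi] with x _ using gl_nonneg x),
    integral_gl]
  rw [show (1:ENNReal) = 2 * ENNReal.ofReal (1/2) from ?_]
  rw [← ENNReal.ofReal_ofNat 2, ← ENNReal.ofReal_mul (by norm_num)]
  norm_num

lemma logisticMeasure_eq : logisticMeasure = volume.withDensity fd := by
  unfold logisticMeasure fd
  congr 1
  ext x
  rw [gl_eq]

instance : IsProbabilityMeasure logisticMeasure := by
  constructor
  rw [logisticMeasure_eq, withDensity_apply _ MeasurableSet.univ, Measure.restrict_univ]
  exact lintegral_fd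

lemma fd_even (x : ℝ) : fd (-x) = fd x := by simp [fd, gl_even]

section ProdComputation

/-- inner reflection -/
lemma inner_swap (k : ℝ → ENNReal) (hk : Measurable k) (a : ℝ) :
    ∫⁻ b, fd b * k (a + b) = ∫⁻ b, fd b * k (a + -b) := by
  have hm : Measurable fun b => fd b * k (a + b) :=
    fd_meas.mul (hk.comp (measurable_const.add measurable_id))
  have h := lintegral_neg_eq (h := fun b => fd b * k (a + b)) hm
  rw [← h]
  refine lintegral_congr fun b => ?_
  show fd (-b) * k (a + -b) = fd b * k (a + -b)
  rw [fd_even]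

/-- outer reflection -/
lemma outer_swap (H : ℝ → ENNReal) (hH : Measurable H) :
    ∫⁻ a, fd a * H a = ∫⁻ a, fd a * H (-a) := by
  have hm : Measurable fun a => fd a * H a := fd_meas.mul hH
  have h := lintegral_neg_eq (h := fun a => fd a * H a) hm
  rw [← h]
  refine lintegral_congr fun a => ?_
  show fd (-a) * H (-a) = fd a * H (-a)
  rw [fd_even]

lemma inner_meas (k : ℝ → ENNReal) (hk : Measurable k) :
    Measurable fun a : ℝ => ∫⁻ b, fd b * k (a + b) :=
  Measurable.lintegral_prod_right
    ((fd_meas.comp measurable_snd).mul (hk.comp (measurable_fst.add measurable_snd)))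

/-- the key product integral -/
lemma lintegral_prod_max :
    ∫⁻ p : ℝ × ℝ, ENNReal.ofReal (max (p.1 + p.2) 0 ^ 2 / 2) ∂(logisticMeasure.prod logisticMeasure)
      = ENNReal.ofReal (Real.pi ^ 2 / 6) := by
  set φ : ℝ → ENNReal := fun s => ENNReal.ofReal (max s 0 ^ 2 / 2) with hφdef
  have hφm : Measurable φ :=
    ENNReal.measurable_ofReal.comp
      (((continuous_id.max continuous_const).pow 2).div_const 2).measurable
  set ψ : ℝ → ENNReal := fun s => ENNReal.ofReal (s ^ 2 / 2) with hψdef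
  have hψm : Measurable ψ :=
    ENNReal.measurable_ofReal.comp ((continuous_id.pow 2).div_const 2).measurable
  have hφψ : ∀ s : ℝ, φ s + φ (-s) = ψ s := by
    intro s
    rw [hφdef, hψdef]
    simp only []
    rcases le_total 0 s with h | h
    · rw [max_eq_left h, max_eq_right (by linarith : -s ≤ (0:ℝ))]
      norm_num
    · rw [max_eq_right h, max_eq_left (by linarith : (0:ℝ) ≤ -s)]
      rw [← ENNReal.ofReal_add (by norm_num) (by positivity)]
      rw [show (0:ℝ) ^ 2 / 2 + (-s) ^ 2 / 2 = s ^ 2 / 2 by ring]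
  have hψsum : ∀ a b : ℝ, ψ (a + b) + ψ (a + -b)
      = ENNReal.ofReal (a ^ 2) + ENNReal.ofReal (b ^ 2) := by
    intro a b
    rw [hψdef]
    simp only []
    rw [← ENNReal.ofReal_add (by positivity) (by positivity),
      ← ENNReal.ofReal_add (sq_nonneg a) (sq_nonneg b)]
    congr 1
    ring
  -- Step A: reduce to iterated integral with densities
  have hQ : ∫⁻ p : ℝ × ℝ, φ (p.1 + p.2) ∂(logisticMeasure.prod logisticMeasure)
      = ∫⁻ a, fd a * ∫⁻ b, fd b * φ (a + b) := by
    rw [logisticMeasure_eq]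
    have hmp : AEMeasurable (fun p : ℝ × ℝ => φ (p.1 + p.2))
        ((volume.withDensity fd).prod (volume.withDensity fd)) :=
      (hφm.comp (measurable_fst.add measurable_snd)).aemeasurable
    rw [lintegral_prod _ hmp]
    have h1 : ∀ a : ℝ, ∫⁻ b, φ (a + b) ∂(volume.withDensity fd) = ∫⁻ b, fd b * φ (a + b) := by
      intro a
      have hma : Measurable fun b : ℝ => φ (a + b) :=
        hφm.comp (measurable_const.add measurable_id)
      rw [lintegral_withDensity_eq_lintegral_mul volume fd_meas hma]
      exact lintegral_congr fun b => rfl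
    rw [lintegral_congr h1]
    rw [lintegral_withDensity_eq_lintegral_mul volume fd_meas (inner_meas φ hφm)]
    exact lintegral_congr fun a => rfl
  rw [hQ]
  set Q := ∫⁻ a, fd a * ∫⁻ b, fd b * φ (a + b) with hQdef
  set Sψ := ∫⁻ a, fd a * ∫⁻ b, fd b * ψ (a + b) with hSdef
  -- Step B: Q + Q = Sψ
  have e1 : Q = ∫⁻ a, fd a * ∫⁻ b, fd b * φ (-(a + b)) := by
    rw [hQdef, outer_swap _ (inner_meas φ hφm)]
    refine lintegral_congr fun a => ?_
    congr 1
    rw [inner_swap φ hφm (-a)]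
    exact lintegral_congr fun b => by rw [show -a + -b = -(a + b) by ring]
  have key1 : Q + Q = Sψ := by
    nth_rewrite 2 [e1]
    rw [hQdef, hSdef]
    have hm1 : Measurable fun a : ℝ => fd a * ∫⁻ b, fd b * φ (a + b) :=
      fd_meas.mul (inner_meas φ hφm)
    rw [← lintegral_add_left hm1]
    refine lintegral_congr fun a => ?_
    rw [← mul_add]
    congr 1
    have hm2 : Measurable fun b : ℝ => fd b * φ (a + b) :=
      fd_meas.mul (hφm.comp (measurable_const.add measurable_id))
    rw [← lintegral_add_left hm2]
    refine lintegral_congr fun b => ?_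
    rw [← mul_add, hφψ (a + b)]
  -- Step C: Sψ + Sψ = constant
  have e2 : Sψ = ∫⁻ a, fd a * ∫⁻ b, fd b * ψ (a + -b) := by
    rw [hSdef]
    exact lintegral_congr fun a => by rw [inner_swap ψ hψm a]
  have key2 : Sψ + Sψ = ENNReal.ofReal (Real.pi ^ 2 / 3) + ENNReal.ofReal (Real.pi ^ 2 / 3) := by
    nth_rewrite 2 [e2]
    rw [hSdef]
    have hm1 : Measurable fun a : ℝ => fd a * ∫⁻ b, fd b * ψ (a + b) :=
      fd_meas.mul (inner_meas ψ hψm)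
    rw [← lintegral_add_left hm1]
    have hstep : ∀ a : ℝ,
        (fd a * ∫⁻ b, fd b * ψ (a + b)) + fd a * ∫⁻ b, fd b * ψ (a + -b)
          = fd a * (ENNReal.ofReal (a ^ 2) + ENNReal.ofReal (Real.pi ^ 2 / 3)) := by
      intro a
      rw [← mul_add]
      congr 1
      have hm2 : Measurable fun b : ℝ => fd b * ψ (a + b) :=
        fd_meas.mul (hψm.comp (measurable_const.add measurable_id))
      rw [← lintegral_add_left hm2]
      have : ∀ b : ℝ, (fd b * ψ (a + b) + fd b * ψ (a + -b))
          = fd b * ENNReal.ofReal (a ^ 2) + fd b * ENNReal.ofReal (b ^ 2) := by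
        intro b
        rw [← mul_add, hψsum a b, mul_add]
      rw [lintegral_congr this]
      have hm3 : Measurable fun b : ℝ => fd b * ENNReal.ofReal (a ^ 2) :=
        fd_meas.mul measurable_const
      rw [lintegral_add_left hm3]
      congr 1
      · rw [lintegral_mul_const _ fd_meas, lintegral_fd, one_mul]
      · rw [lintegral_congr (fun b : ℝ => mul_comm (fd b) (ENNReal.ofReal (b ^ 2)))]
        exact lintegral_sq_fd
    rw [lintegral_congr hstep]
    have : ∀ a : ℝ, fd a * (ENNReal.ofReal (a ^ 2) + ENNReal.ofReal (Real.pi ^ 2 / 3))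
        = fd a * ENNReal.ofReal (a ^ 2) + fd a * ENNReal.ofReal (Real.pi ^ 2 / 3) := fun a => mul_add _ _ _
    rw [lintegral_congr this]
    have hm4 : Measurable fun a : ℝ => fd a * ENNReal.ofReal (a ^ 2) :=
      fd_meas.mul (ENNReal.measurable_ofReal.comp (measurable_id.pow_const 2))
    rw [lintegral_add_left hm4]
    congr 1
    · rw [lintegral_congr (fun a : ℝ => mul_comm (fd a) (ENNReal.ofReal (a ^ 2)))]
      exact lintegral_sq_fd
    · rw [lintegral_mul_const _ fd_meas, lintegral_fd, one_mul]
  -- finish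
  have hS : Sψ = ENNReal.ofReal (Real.pi ^ 2 / 3) := by
    have h2 := key2
    rw [← two_mul, ← two_mul] at h2
    exact (ENNReal.mul_right_inj (by norm_num) (by norm_num)).mp h2
  have hfin : Q + Q = ENNReal.ofReal (Real.pi ^ 2 / 6) + ENNReal.ofReal (Real.pi ^ 2 / 6) := by
    rw [key1, hS, ← ENNReal.ofReal_add (by positivity) (by positivity)]
    congr 1
    ring
  rw [← two_mul, ← two_mul] at hfin
  exact (ENNReal.mul_right_inj (by norm_num) (by norm_num)).mp hfin

end ProdComputation

end LogisticAux

theorem tail_density_mean_pi_sq_div_six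
    {Ω : Type*} [MeasureSpace Ω] (P : Measure Ω) [IsProbabilityMeasure P]
    (X₁ X₂ : Ω → ℝ) (hm₁ : Measurable X₁) (hm₂ : Measurable X₂)
    (hindep : IndepFun X₁ X₂ P)
    (h₁ : Measure.map X₁ P = logisticMeasure)
    (h₂ : Measure.map X₂ P = logisticMeasure) :
    ∫ x in Set.Ioi (0 : ℝ), x * (P {ω | x < X₁ ω + X₂ ω}).toReal = Real.pi ^ 2 / 6 := by
  classical
  have hpair : Measure.map (fun ω => (X₁ ω, X₂ ω)) P = logisticMeasure.prod logisticMeasure := by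
    exact ((indepFun_iff_map_prod_eq_prod_map_map hm₁.aemeasurable
      hm₂.aemeasurable).mp hindep).trans (by rw [h₁, h₂])
  have hS : Measurable fun ω => X₁ ω + X₂ ω := hm₁.add hm₂
  set f : Ω → ℝ := fun ω => max (X₁ ω + X₂ ω) 0 with hfdef
  have hfm : AEMeasurable f P := (hS.max measurable_const).aemeasurable
  have hfnn : 0 ≤ᵐ[P] f := Filter.Eventually.of_forall fun ω => le_max_right _ _
  have hlc := lintegral_comp_eq_lintegral_meas_lt_mul P hfnn hfm
    (fun t _ => intervalIntegral.intervalIntegrable_id)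
    (by filter_upwards [ae_restrict_mem measurableSet_Ioi] with x hx using hx.out.le)
  have hlhs : ∀ ω, ENNReal.ofReal (∫ t in (0:ℝ)..f ω, t)
      = ENNReal.ofReal (max (X₁ ω + X₂ ω) 0 ^ 2 / 2) := by
    intro ω
    rw [integral_id]
    norm_num [hfdef]
  rw [lintegral_congr hlhs] at hlc
  have hmeasp : Measurable fun p : ℝ × ℝ => ENNReal.ofReal (max (p.1 + p.2) 0 ^ 2 / 2) :=
    ENNReal.measurable_ofReal.comp
      ((((measurable_fst.add measurable_snd).max measurable_const).pow_const 2).div_const 2)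
  have hmapint : ∫⁻ ω, ENNReal.ofReal (max (X₁ ω + X₂ ω) 0 ^ 2 / 2) ∂P
      = ∫⁻ p : ℝ × ℝ, ENNReal.ofReal (max (p.1 + p.2) 0 ^ 2 / 2)
          ∂(logisticMeasure.prod logisticMeasure) := by
    rw [← hpair, lintegral_map hmeasp (hm₁.prodMk hm₂)]
  rw [hmapint, LogisticAux.lintegral_prod_max] at hlc
  -- identify the tail set
  have hset : ∀ t ∈ Ioi (0:ℝ), P {a | t < f a} * ENNReal.ofReal t
      = P {ω | t < X₁ ω + X₂ ω} * ENNReal.ofReal t := by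
    intro t ht
    congr 2
    ext ω
    simp only [hfdef, Set.mem_setOf_eq, lt_max_iff]
    exact or_iff_left (lt_asymm ht.out)
  rw [setLIntegral_congr_fun measurableSet_Ioi hset] at hlc
  -- convert the Bochner integral to a lintegral
  have hmono : Measurable fun x : ℝ => P {ω | x < X₁ ω + X₂ ω} :=
    Antitone.measurable fun s t hst => measure_mono fun ω h => lt_of_le_of_lt hst h
  have hnn : 0 ≤ᵐ[volume.restrict (Ioi (0:ℝ))]
      fun x => x * (P {ω | x < X₁ ω + X₂ ω}).toReal := by
    filter_upwards [ae_restrict_mem measurableSet_Ioi] with x hx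
    exact mul_nonneg hx.out.le ENNReal.toReal_nonneg
  have hsm : AEStronglyMeasurable (fun x => x * (P {ω | x < X₁ ω + X₂ ω}).toReal)
      (volume.restrict (Ioi (0:ℝ))) :=
    (measurable_id.mul hmono.ennreal_toReal).aestronglyMeasurable
  rw [integral_eq_lintegral_of_nonneg_ae hnn hsm]
  have hconv : ∫⁻ x in Ioi (0:ℝ), ENNReal.ofReal (x * (P {ω | x < X₁ ω + X₂ ω}).toReal)
      = ∫⁻ t in Ioi (0:ℝ), P {ω | t < X₁ ω + X₂ ω} * ENNReal.ofReal t := by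
    refine setLIntegral_congr_fun measurableSet_Ioi ?_
    intro x hx
    beta_reduce
    rw [ENNReal.ofReal_mul hx.out.le, ENNReal.ofReal_toReal (measure_ne_top P _), mul_comm]
  rw [hconv, ← hlc, ENNReal.toReal_ofReal (by positivity)]
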